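/- Let f ∈ LC with 0 in the interior of supp(f). Then the polar function f° (y) = inf_{x ∈ supp f} e^{−⟨x,y⟩}/f(x) is again a non-degenerate integrable log-concave function, i.e., 0 < ∫ f°(x) dx < ∞. -/

import Mathlib

open MeasureTheory Filter
noncomputable section

/-- `ℝⁿ` as a Euclidean space. -/
abbrev Euc (n : ℕ) := EuclideanSpace ℝ (Fin n)

/-- `f` is a non-degenerate, upper semicontinuous, integrable log-concave
function on `ℝⁿ` (the class `LC`): `f ≥ 0`, `f` is upper semicontinuous,
log-concave, integrable with `0 < ∫ f`, and the interior of its support is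
non-empty. -/
def IsLC {n : ℕ} (f : Euc n → ℝ) : Prop :=
  (∀ x, 0 ≤ f x) ∧ UpperSemicontinuous f ∧
  (∀ x y : Euc n, ∀ a b : ℝ, 0 ≤ a → 0 ≤ b → a + b = 1 →
      f x ^ a * f y ^ b ≤ f (a • x + b • y)) ∧
  Integrable f ∧ 0 < ∫ x, f x ∧ (interior (Function.support f)).Nonempty

/-- The polar of `f` with respect to `z`:
`f^z(y) = inf_{x ∈ supp f} e^{−⟨x−z, y−z⟩}/f(x)`. -/
def polarAt {n : ℕ} (f : Euc n → ℝ) (z y : Euc n) : ℝ :=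
  ⨅ x : Function.support f,
    Real.exp (-(inner ℝ ((x : Euc n) - z) (y - z) : ℝ)) / f x

lemma euc_sum_single {n : ℕ} (x : Euc n) :
    ∑ i, x i • (EuclideanSpace.single i (1:ℝ)) = x := by
  have h := (EuclideanSpace.basisFun (Fin n) ℝ).sum_repr x
  simpa [EuclideanSpace.basisFun_apply, EuclideanSpace.basisFun_repr] using h

lemma sum_abs_le_sqrt {n : ℕ} (x : Euc n) : ∑ i, |x i| ≤ Real.sqrt n * ‖x‖ := by
  have h := Finset.sum_mul_sq_le_sq_mul_sq Finset.univ (fun i => |x i|) (fun _ => (1:ℝ))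
  simp only [mul_one, one_pow, sq_abs] at h
  have hx : ‖x‖ = Real.sqrt (∑ i, x i ^ 2) := by
    rw [EuclideanSpace.norm_eq]
    congr 1
    exact Finset.sum_congr rfl fun i _ => by rw [Real.norm_eq_abs, sq_abs]
  have hn : ∑ _i : Fin n, (1:ℝ) = n := by simp
  have h2 : (∑ i, |x i|) ^ 2 ≤ (Real.sqrt n * ‖x‖) ^ 2 := by
    rw [mul_pow, hx, Real.sq_sqrt (Finset.sum_nonneg fun i _ => sq_nonneg (x i)),
      Real.sq_sqrt (n.cast_nonneg)]
    calc (∑ i, |x i|) ^ 2 ≤ (∑ i, x i ^ 2) * ∑ _i : Fin n, (1:ℝ) := h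
      _ = (n:ℝ) * ∑ i, x i ^ 2 := by rw [hn, mul_comm]
  exact (pow_le_pow_iff_left₀ (by positivity) (by positivity) two_ne_zero).mp h2

section helpers
variable {n : ℕ} {f : Euc n → ℝ}

lemma lc_supp_convex (hpos : ∀ x, 0 ≤ f x)
    (hlc : ∀ x y : Euc n, ∀ a b : ℝ, 0 ≤ a → 0 ≤ b → a + b = 1 →
      f x ^ a * f y ^ b ≤ f (a • x + b • y)) :
    Convex ℝ (Function.support f) := by
  intro x hx y hy a b ha hb hab
  have hfx : 0 < f x := (hpos x).lt_of_ne' (Function.mem_support.mp hx)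
  have hfy : 0 < f y := (hpos y).lt_of_ne' (Function.mem_support.mp hy)
  have : 0 < f x ^ a * f y ^ b :=
    mul_pos (Real.rpow_pos_of_pos hfx a) (Real.rpow_pos_of_pos hfy b)
  exact Function.mem_support.mpr (lt_of_lt_of_le this (hlc x y a b ha hb hab)).ne'

lemma lc_log_concave (hpos : ∀ x, 0 ≤ f x)
    (hlc : ∀ x y : Euc n, ∀ a b : ℝ, 0 ≤ a → 0 ≤ b → a + b = 1 →
      f x ^ a * f y ^ b ≤ f (a • x + b • y)) :
    ConcaveOn ℝ (Function.support f) (fun x => Real.log (f x)) := by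
  refine ⟨lc_supp_convex hpos hlc, ?_⟩
  intro x hx y hy a b ha hb hab
  have hfx : 0 < f x := (hpos x).lt_of_ne' (Function.mem_support.mp hx)
  have hfy : 0 < f y := (hpos y).lt_of_ne' (Function.mem_support.mp hy)
  have h1 : 0 < f x ^ a * f y ^ b :=
    mul_pos (Real.rpow_pos_of_pos hfx a) (Real.rpow_pos_of_pos hfy b)
  have := Real.log_le_log h1 (hlc x y a b ha hb hab)
  rwa [Real.log_mul (Real.rpow_pos_of_pos hfx a).ne' (Real.rpow_pos_of_pos hfy b).ne',
    Real.log_rpow hfx, Real.log_rpow hfy] at this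

lemma lc_ball_lower (hpos : ∀ x, 0 ≤ f x)
    (hlc : ∀ x y : Euc n, ∀ a b : ℝ, 0 ≤ a → 0 ≤ b → a + b = 1 →
      f x ^ a * f y ^ b ≤ f (a • x + b • y))
    {r : ℝ} (hr : 0 < r) (hball : Metric.ball (0 : Euc n) r ⊆ Function.support f) :
    ∃ m : ℝ, 0 < m ∧ m ≤ f 0 ∧
      (∀ x : Euc n, ‖x‖ ≤ r / (2 * (Real.sqrt n + 1)) → m ≤ f x) ∧
      (∀ p : Fin n × Bool,
        m ≤ f ((if p.2 then r/2 else -(r/2)) • EuclideanSpace.single p.1 1)) := by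
  have hsn : (0:ℝ) ≤ Real.sqrt n := Real.sqrt_nonneg n
  set ρ' : ℝ := r / 2 with hρ'def
  have hρ' : 0 < ρ' := by positivity
  set pt : Fin n × Bool → Euc n :=
    fun p => (if p.2 then ρ' else -ρ') • EuclideanSpace.single p.1 1 with hptdef
  have hptnorm : ∀ p, ‖pt p‖ = ρ' := by
    intro p
    rw [hptdef]
    rw [norm_smul, EuclideanSpace.norm_single, norm_one, mul_one]
    rcases p.2 with _ | _ <;> simp [abs_of_pos hρ', abs_of_neg (neg_neg_iff_pos.mpr hρ')]
  have hmem_ball : ∀ p, pt p ∈ Metric.ball (0 : Euc n) r := by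
    intro p
    rw [Metric.mem_ball, dist_zero_right, hptnorm p]
    linarith
  have hptsupp : ∀ p, pt p ∈ Function.support f := fun p => hball (hmem_ball p)
  have h0supp : (0 : Euc n) ∈ Function.support f :=
    hball (Metric.mem_ball_self hr)
  have hf0 : 0 < f 0 := (hpos 0).lt_of_ne' (Function.mem_support.mp h0supp)
  set F : Finset ℝ := insert (f 0) (Finset.image (fun p => f (pt p)) Finset.univ) with hFdef
  have hFne : F.Nonempty := ⟨f 0, Finset.mem_insert_self _ _⟩
  set m : ℝ := F.min' hFne with hmdef
  have hm0 : m ≤ f 0 := Finset.min'_le _ _ (Finset.mem_insert_self _ _)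
  have hmpt : ∀ p, m ≤ f (pt p) := fun p =>
    Finset.min'_le _ _ (Finset.mem_insert_of_mem
      (Finset.mem_image_of_mem _ (Finset.mem_univ p)))
  have hmpos : 0 < m := by
    have := Finset.min'_mem F hFne
    rw [← hmdef] at this
    rcases Finset.mem_insert.mp this with h | h
    · rw [h]; exact hf0
    · obtain ⟨p, _, hp⟩ := Finset.mem_image.mp h
      rw [← hp]
      exact (hpos _).lt_of_ne' (Function.mem_support.mp (hptsupp p))
  refine ⟨m, hmpos, hm0, ?_, fun p => hmpt p⟩
  intro x hx
  -- convex combination setup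
  set w : Option (Fin n) → ℝ :=
    fun o => Option.elim o (1 - (∑ i, |x i|) / ρ') (fun i => |x i| / ρ') with hwdef
  set p : Option (Fin n) → Euc n :=
    fun o => Option.elim o 0 (fun i => pt (i, decide (0 ≤ x i))) with hpdef
  have hsum_abs : ∑ i, |x i| ≤ ρ' := by
    have h1 : Real.sqrt n * ‖x‖ ≤ Real.sqrt n * (r / (2 * (Real.sqrt n + 1))) :=
      mul_le_mul_of_nonneg_left hx hsn
    have h2 : Real.sqrt n * (r / (2 * (Real.sqrt n + 1))) ≤ ρ' := by
      rw [hρ'def, mul_div_assoc']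
      rw [div_le_div_iff₀ (by positivity) two_pos]
      nlinarith
    exact le_trans (sum_abs_le_sqrt x) (le_trans h1 h2)
  have hw_nonneg : ∀ i ∈ Finset.univ, 0 ≤ w i := by
    rintro (_ | i) _
    · simp only [hwdef, Option.elim]
      rw [sub_nonneg, div_le_one hρ']
      exact hsum_abs
    · exact div_nonneg (abs_nonneg _) hρ'.le
  have hsum_w : ∑ i, w i = 1 := by
    rw [Fintype.sum_option]
    simp only [hwdef, Option.elim]
    rw [← Finset.sum_div]
    ring
  have hp_mem : ∀ i ∈ Finset.univ, p i ∈ Function.support f := by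
    rintro (_ | i) _
    · exact h0supp
    · exact hptsupp _
  have hcomb : ∑ i, w i • p i = x := by
    rw [Fintype.sum_option]
    simp only [hwdef, hpdef, Option.elim, smul_zero, zero_add]
    conv_rhs => rw [← euc_sum_single x]
    refine Finset.sum_congr rfl fun i _ => ?_
    simp only [hptdef]
    by_cases h : 0 ≤ x i
    · rw [if_pos (by simpa using h), smul_smul, abs_of_nonneg h,
        div_mul_cancel₀ _ hρ'.ne']
    · push_neg at h
      rw [if_neg (by simpa using h.not_ge), smul_smul, abs_of_neg h]
      congr 1
      field_simp
  have hjensen := (lc_log_concave hpos hlc).le_map_sum hw_nonneg hsum_w hp_mem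
  rw [hcomb] at hjensen
  have hxsupp : x ∈ Function.support f := by
    have := (lc_supp_convex hpos hlc).sum_mem hw_nonneg hsum_w hp_mem
    rwa [hcomb] at this
  have hfx : 0 < f x := (hpos x).lt_of_ne' (Function.mem_support.mp hxsupp)
  have hlow : Real.log m ≤ ∑ i, w i • Real.log (f (p i)) := by
    calc Real.log m = ∑ i, w i • Real.log m := by
          rw [← Finset.sum_smul, hsum_w, one_smul]
      _ ≤ ∑ i, w i • Real.log (f (p i)) := by
          refine Finset.sum_le_sum fun i hi => ?_
          have hb : m ≤ f (p i) := by
            rcases i with _ | i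
            · exact hm0
            · exact hmpt _
          exact smul_le_smul_of_nonneg_left (Real.log_le_log hmpos hb) (hw_nonneg i hi)
  have := le_trans hlow hjensen
  exact (Real.log_le_log_iff hmpos hfx).mp this
end helpers

section helpers2
variable {n : ℕ} {f : Euc n → ℝ}

lemma lc_key_int (hpos : ∀ x, 0 ≤ f x)
    (hlc : ∀ x y : Euc n, ∀ a b : ℝ, 0 ≤ a → 0 ≤ b → a + b = 1 →
      f x ^ a * f y ^ b ≤ f (a • x + b • y))
    (hint : Integrable f) {ρ m : ℝ} (hρ : 0 < ρ) (hm : 0 < m)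
    (hball : ∀ u : Euc n, ‖u‖ ≤ ρ → m ≤ f u) (x : Euc n) :
    Real.sqrt (f x * m) * (volume (Metric.ball (0 : Euc n) (ρ/2))).toReal ≤
      ∫ z in Metric.ball ((1/2 : ℝ) • x) (ρ/2), f z := by
  have hvol : volume (Metric.ball ((1/2 : ℝ) • x) (ρ/2)) =
      volume (Metric.ball (0 : Euc n) (ρ/2)) :=
    Measure.addHaar_ball_center volume _ _
  rw [← hvol]
  refine setIntegral_ge_of_const_le_real Metric.isOpen_ball.measurableSet
    measure_ball_lt_top.ne (fun z hz => ?_) hint.integrableOn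
  set u : Euc n := (2:ℝ) • z - x with hudef
  have hzu : (1/2 : ℝ) • x + (1/2 : ℝ) • u = z := by
    rw [hudef, smul_sub, smul_smul]
    norm_num
  have hun : ‖u‖ ≤ ρ := by
    have : u = (2:ℝ) • (z - (1/2 : ℝ) • x) := by
      rw [hudef, smul_sub, smul_smul]; norm_num
    rw [this, norm_smul]
    have := Metric.mem_ball.mp hz
    rw [dist_eq_norm] at this
    rw [Real.norm_ofNat]
    linarith
  have h1 := hlc x u (1/2) (1/2) (by norm_num) (by norm_num) (by norm_num)
  rw [hzu] at h1
  refine le_trans ?_ h1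
  rw [Real.sqrt_mul (hpos x), Real.sqrt_eq_rpow, Real.sqrt_eq_rpow]
  exact mul_le_mul_of_nonneg_left
    (Real.rpow_le_rpow hm.le (hball u hun) (by norm_num))
    (Real.rpow_nonneg (hpos x) _)

lemma lc_far_small (hpos : ∀ x, 0 ≤ f x)
    (hlc : ∀ x y : Euc n, ∀ a b : ℝ, 0 ≤ a → 0 ≤ b → a + b = 1 →
      f x ^ a * f y ^ b ≤ f (a • x + b • y))
    (hint : Integrable f) {ρ m : ℝ} (hρ : 0 < ρ) (hm : 0 < m)
    (hball : ∀ u : Euc n, ‖u‖ ≤ ρ → m ≤ f u) :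
    ∃ R : ℝ, 0 < R ∧ ∀ x : Euc n, R ≤ ‖x‖ → f x ≤ m / 2 := by
  set v : ℝ := (volume (Metric.ball (0 : Euc n) (ρ/2))).toReal with hvdef
  have hv : 0 < v := by
    rw [hvdef]
    exact ENNReal.toReal_pos (Metric.measure_ball_pos volume _ (by positivity)).ne'
      measure_ball_lt_top.ne
  set ε : ℝ := Real.sqrt (m/2 * m) * v with hεdef
  have hε : 0 < ε := by
    rw [hεdef]
    exact mul_pos (Real.sqrt_pos.mpr (by positivity)) hv
  -- tail of the integral tends to 0
  have hmono : Monotone (fun k : ℕ => Metric.closedBall (0 : Euc n) k) := by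
    intro a b hab
    exact Metric.closedBall_subset_closedBall (by exact_mod_cast hab)
  have hunion : (⋃ k : ℕ, Metric.closedBall (0 : Euc n) k) = Set.univ := by
    ext z
    simp only [Set.mem_iUnion, Metric.mem_closedBall, Set.mem_univ, iff_true]
    obtain ⟨k, hk⟩ := exists_nat_ge (dist z 0)
    exact ⟨k, hk⟩
  have htend : Filter.Tendsto (fun k : ℕ => ∫ z in Metric.closedBall (0 : Euc n) k, f z)
      Filter.atTop (nhds (∫ z, f z)) := by
    have := tendsto_setIntegral_of_monotone
      (fun k : ℕ => measurableSet_closedBall) hmono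
      (by rw [hunion]; exact hint.integrableOn)
    rwa [hunion, setIntegral_univ] at this
  have htail : Filter.Tendsto
      (fun k : ℕ => ∫ z in (Metric.closedBall (0 : Euc n) k)ᶜ, f z)
      Filter.atTop (nhds 0) := by
    have heq : ∀ k : ℕ, ∫ z in (Metric.closedBall (0 : Euc n) k)ᶜ, f z =
        (∫ z, f z) - ∫ z in Metric.closedBall (0 : Euc n) k, f z := by
      intro k
      rw [eq_sub_iff_add_eq, add_comm]
      exact integral_add_compl measurableSet_closedBall hint
    simp only [heq]
    have := (tendsto_const_nhds (x := ∫ z, f z) (f := Filter.atTop (α := ℕ))).sub htend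
    simpa using this
  obtain ⟨k₀, hk₀⟩ := (htail.eventually_lt_const hε).exists
  refine ⟨2 * k₀ + ρ + 2, by positivity, fun x hx => ?_⟩
  -- the ball around x/2 lies in the far region
  have hsub : Metric.ball ((1/2 : ℝ) • x) (ρ/2) ⊆ (Metric.closedBall (0 : Euc n) k₀)ᶜ := by
    intro z hz
    simp only [Set.mem_compl_iff, Metric.mem_closedBall, not_le]
    have h1 : dist z ((1/2 : ℝ) • x) < ρ/2 := Metric.mem_ball.mp hz
    have h2 : ‖(1/2 : ℝ) • x‖ = ‖x‖ / 2 := by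
      rw [norm_smul, Real.norm_eq_abs, abs_of_pos (by norm_num : (0:ℝ) < 1/2)]
      ring
    have h3 : dist z 0 ≥ ‖x‖/2 - ρ/2 := by
      have := dist_triangle ((1/2 : ℝ) • x) z 0
      rw [dist_comm ((1/2 : ℝ) • x) z] at this
      have h4 : dist ((1/2 : ℝ) • x) 0 = ‖x‖/2 := by rw [dist_zero_right, h2]
      linarith
    have : (k₀ : ℝ) < ‖x‖/2 - ρ/2 := by linarith
    linarith
  have hchain : Real.sqrt (f x * m) * v ≤ ε := by
    calc Real.sqrt (f x * m) * v ≤ ∫ z in Metric.ball ((1/2 : ℝ) • x) (ρ/2), f z :=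
          lc_key_int hpos hlc hint hρ hm hball x
      _ ≤ ∫ z in (Metric.closedBall (0 : Euc n) k₀)ᶜ, f z := by
          refine setIntegral_mono_set hint.integrableOn
            (Filter.Eventually.of_forall fun z => hpos z) hsub.eventuallyLE
      _ ≤ ε := hk₀.le
  have h5 : Real.sqrt (f x * m) ≤ Real.sqrt (m/2 * m) := by
    exact (mul_le_mul_iff_left₀ hv).mp hchain
  have h6 : f x * m ≤ m/2 * m := (Real.sqrt_le_sqrt_iff (by positivity)).mp h5
  exact le_of_mul_le_mul_right h6 hm

lemma lc_bounded (hpos : ∀ x, 0 ≤ f x)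
    (hlc : ∀ x y : Euc n, ∀ a b : ℝ, 0 ≤ a → 0 ≤ b → a + b = 1 →
      f x ^ a * f y ^ b ≤ f (a • x + b • y))
    (hint : Integrable f) {ρ m : ℝ} (hρ : 0 < ρ) (hm : 0 < m)
    (hball : ∀ u : Euc n, ‖u‖ ≤ ρ → m ≤ f u) :
    ∃ M : ℝ, 0 < M ∧ ∀ x : Euc n, f x ≤ M := by
  set v : ℝ := (volume (Metric.ball (0 : Euc n) (ρ/2))).toReal with hvdef
  have hv : 0 < v := by
    rw [hvdef]
    exact ENNReal.toReal_pos (Metric.measure_ball_pos volume _ (by positivity)).ne'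
      measure_ball_lt_top.ne
  set I : ℝ := ∫ z, f z with hIdef
  have hI : 0 ≤ I := integral_nonneg hpos
  refine ⟨(I/v)^2 / m + 1, by positivity, fun x => ?_⟩
  have h1 : Real.sqrt (f x * m) * v ≤ I := by
    calc Real.sqrt (f x * m) * v ≤ ∫ z in Metric.ball ((1/2 : ℝ) • x) (ρ/2), f z :=
          lc_key_int hpos hlc hint hρ hm hball x
      _ ≤ I := setIntegral_le_integral hint (Filter.Eventually.of_forall hpos)
  have h2 : Real.sqrt (f x * m) ≤ I / v := (le_div_iff₀ hv).mpr h1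
  have h3 : f x * m ≤ (I/v)^2 := by
    have := (Real.sqrt_le_sqrt_iff (by positivity)).mp
      (by rwa [Real.sqrt_sq (by positivity)] : Real.sqrt (f x * m) ≤ Real.sqrt ((I/v)^2))
    exact this
  have h4 : f x ≤ (I/v)^2 / m := (le_div_iff₀ hm).mpr h3
  linarith

lemma lc_doubling (hpos : ∀ x, 0 ≤ f x)
    (hlc : ∀ x y : Euc n, ∀ a b : ℝ, 0 ≤ a → 0 ≤ b → a + b = 1 →
      f x ^ a * f y ^ b ≤ f (a • x + b • y)) (hf0 : 0 < f 0) (z : Euc n) :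
    f ((2:ℝ) • z) ≤ f z ^ 2 / f 0 := by
  have h := hlc ((2:ℝ) • z) 0 (1/2) (1/2) (by norm_num) (by norm_num) (by norm_num)
  have hz : (1/2 : ℝ) • ((2:ℝ) • z) + (1/2 : ℝ) • (0 : Euc n) = z := by
    rw [smul_zero, add_zero, smul_smul]; norm_num
  rw [hz] at h
  have h2 : Real.sqrt (f ((2:ℝ) • z)) * Real.sqrt (f 0) ≤ f z := by
    rw [Real.sqrt_eq_rpow, Real.sqrt_eq_rpow]; exact h
  have key : f ((2:ℝ) • z) * f 0 ≤ f z ^ 2 := by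
    calc f ((2:ℝ) • z) * f 0
        = (Real.sqrt (f ((2:ℝ) • z)) * Real.sqrt (f 0)) ^ 2 := by
          rw [mul_pow, Real.sq_sqrt (hpos _), Real.sq_sqrt (hpos _)]
      _ ≤ f z ^ 2 := pow_le_pow_left₀ (by positivity) h2 2
  exact (le_div_iff₀ hf0).mpr key

lemma lc_iter (hpos : ∀ x, 0 ≤ f x)
    (hlc : ∀ x y : Euc n, ∀ a b : ℝ, 0 ≤ a → 0 ≤ b → a + b = 1 →
      f x ^ a * f y ^ b ≤ f (a • x + b • y)) (hf0 : 0 < f 0)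
    {m R : ℝ} (hm : 0 < m) (hm0 : m ≤ f 0)
    (hfar : ∀ x : Euc n, R ≤ ‖x‖ → f x ≤ m / 2) :
    ∀ k : ℕ, ∀ y : Euc n, R ≤ ‖y‖ → f (((2:ℝ)^k) • y) ≤ m * (1/2)^(2^k) := by
  intro k
  induction k with
  | zero =>
    intro y hy
    simpa [pow_zero, one_smul] using (by linarith [hfar y hy] : f y ≤ m * (1/2)^(2^0))
  | succ k ih =>
    intro y hy
    have h1 : ((2:ℝ)^(k+1)) • y = (2:ℝ) • (((2:ℝ)^k) • y) := by
      rw [smul_smul, pow_succ']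
    have hc : (0:ℝ) < (1/2)^(2^(k+1)) := by positivity
    rw [h1]
    calc f ((2:ℝ) • (((2:ℝ)^k) • y)) ≤ f (((2:ℝ)^k) • y) ^ 2 / f 0 :=
          lc_doubling hpos hlc hf0 _
      _ ≤ (m * (1/2)^(2^k)) ^ 2 / f 0 := by
          gcongr
          · exact hpos _
          · exact ih y hy
      _ = m^2 * (1/2)^(2^(k+1)) / f 0 := by
          rw [mul_pow, ← pow_mul, ← pow_succ]
      _ ≤ m * (1/2)^(2^(k+1)) := by
          rw [div_le_iff₀ hf0]
          have hmm : m * m ≤ m * f 0 := mul_le_mul_of_nonneg_left hm0 hm.le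
          nlinarith [hc.le, hm.le]

lemma lc_decay (hpos : ∀ x, 0 ≤ f x)
    (hlc : ∀ x y : Euc n, ∀ a b : ℝ, 0 ≤ a → 0 ≤ b → a + b = 1 →
      f x ^ a * f y ^ b ≤ f (a • x + b • y))
    (hint : Integrable f) {ρ m : ℝ} (hρ : 0 < ρ) (hm : 0 < m) (hm0 : m ≤ f 0)
    (hball : ∀ u : Euc n, ‖u‖ ≤ ρ → m ≤ f u) :
    ∃ δ C : ℝ, 0 < δ ∧ 0 < C ∧ ∀ x : Euc n, f x ≤ C * Real.exp (-δ * ‖x‖) := by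
  have hf0 : 0 < f 0 := lt_of_lt_of_le hm hm0
  obtain ⟨M, hM, hMb⟩ := lc_bounded hpos hlc hint hρ hm hball
  obtain ⟨R, hR, hfar⟩ := lc_far_small hpos hlc hint hρ hm hball
  set δ : ℝ := Real.log 2 / (2 * R) with hδdef
  have hlog2 : (0:ℝ) < Real.log 2 := Real.log_pos one_lt_two
  have hδ : 0 < δ := by rw [hδdef]; positivity
  set C : ℝ := max m (M * Real.exp (δ * R)) with hCdef
  have hC : 0 < C := lt_of_lt_of_le hm (le_max_left _ _)
  refine ⟨δ, C, hδ, hC, fun x => ?_⟩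
  by_cases hx : ‖x‖ ≤ R
  · calc f x ≤ M := hMb x
      _ = M * 1 := (mul_one M).symm
      _ ≤ M * (Real.exp (δ * R) * Real.exp (-δ * ‖x‖)) := by
          refine mul_le_mul_of_nonneg_left ?_ hM.le
          rw [← Real.exp_add]
          refine Real.one_le_exp ?_
          nlinarith
      _ = (M * Real.exp (δ * R)) * Real.exp (-δ * ‖x‖) := by ring
      _ ≤ C * Real.exp (-δ * ‖x‖) :=
          mul_le_mul_of_nonneg_right (le_max_right _ _) (Real.exp_nonneg _)
  · push_neg at hx
    have hP : ∃ j : ℕ, ‖x‖ < 2^(j+1) * R := by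
      obtain ⟨j, hj⟩ := pow_unbounded_of_one_lt (‖x‖ / R) one_lt_two
      refine ⟨j, ?_⟩
      have := (div_lt_iff₀ hR).mp hj
      have h2 : (2:ℝ)^j ≤ 2^(j+1) := by
        apply pow_le_pow_right₀ one_le_two (Nat.le_succ j)
      nlinarith
    set k := Nat.find hP with hkdef
    have hk : ‖x‖ < 2^(k+1) * R := Nat.find_spec hP
    have hk2 : (2:ℝ)^k * R ≤ ‖x‖ := by
      match k, hkdef with
      | 0, _ => simpa using hx.le
      | (j+1), hkdef =>
        have hmin : ¬ (‖x‖ < 2^(j+1) * R) := by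
          have := Nat.find_min hP (by omega : j < k)
          simpa [← hkdef] using this
        push_neg at hmin
        exact hmin
    have h2k : ((2:ℝ)^k) ≠ 0 := by positivity
    set y : Euc n := ((2:ℝ)^k)⁻¹ • x with hydef
    have hxy : ((2:ℝ)^k) • y = x := smul_inv_smul₀ h2k x
    have hyn : R ≤ ‖y‖ := by
      rw [hydef, norm_smul, norm_inv, Real.norm_eq_abs, abs_of_pos (by positivity)]
      rw [le_inv_mul_iff₀ (by positivity)]
      linarith [hk2]
    have hiter := lc_iter hpos hlc hf0 hm hm0 hfar k y hyn
    rw [hxy] at hiter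
    have hpow : ((1:ℝ)/2)^(2^k) = Real.exp (-(2^k : ℕ) * Real.log 2) := by
      rw [← Real.exp_log (show (0:ℝ) < (1/2)^(2^k) by positivity), Real.log_pow,
        one_div, Real.log_inv]
      ring_nf
    have hexp : Real.exp (-(2^k : ℕ) * Real.log 2) ≤ Real.exp (-δ * ‖x‖) := by
      apply Real.exp_le_exp.mpr
      rw [hδdef]
      have h2kR : ‖x‖ < 2^k * (2 * R) := by
        have : (2:ℝ)^(k+1) = 2^k * 2 := pow_succ 2 k
        nlinarith
      have hcast : ((2^k : ℕ) : ℝ) = (2:ℝ)^k := by push_cast; ring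
      rw [hcast]
      rw [neg_mul, neg_mul, neg_le_neg_iff, div_mul_eq_mul_div, div_le_iff₀ (by positivity)]
      calc Real.log 2 * ‖x‖ ≤ Real.log 2 * (2^k * (2*R)) := by nlinarith
        _ = (2:ℝ)^k * Real.log 2 * (2*R) := by ring
    calc f x ≤ m * ((1:ℝ)/2)^(2^k) := hiter
      _ = m * Real.exp (-(2^k : ℕ) * Real.log 2) := by rw [hpow]
      _ ≤ m * Real.exp (-δ * ‖x‖) := mul_le_mul_of_nonneg_left hexp hm.le
      _ ≤ C * Real.exp (-δ * ‖x‖) :=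
          mul_le_mul_of_nonneg_right (le_max_left _ _) (Real.exp_nonneg _)

end helpers2

lemma exp_neg_norm_integrable (n : ℕ) {c : ℝ} (hc : 0 < c) :
    Integrable (fun y : Euc n => Real.exp (-c * ‖y‖)) := by
  set q : ℝ := n + 1 with hqdef
  have hq : 0 < q := by positivity
  set ε : ℝ := min (c / q) 1 with hεdef
  have hε : 0 < ε := lt_min (by positivity) one_pos
  have hεq : ε * q ≤ c := by
    have : ε ≤ c / q := min_le_left _ _
    calc ε * q ≤ (c / q) * q := mul_le_mul_of_nonneg_right this hq.le
      _ = c := by field_simp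
  set K : ℝ := ε⁻¹ ^ q with hKdef
  have hK : 0 < K := Real.rpow_pos_of_pos (by positivity) _
  have hint : Integrable (fun x : Euc n => (1 + ‖x‖) ^ (-q)) volume := by
    apply integrable_one_add_norm
    rw [finrank_euclideanSpace_fin]
    rw [hqdef]; linarith
  refine (hint.const_mul K).mono'
    ((Real.continuous_exp.comp (continuous_const.mul continuous_norm)).aestronglyMeasurable)
    (Filter.Eventually.of_forall fun x => ?_)
  set t : ℝ := ‖x‖ with htdef
  have ht : 0 ≤ t := norm_nonneg x
  have h1t : (0:ℝ) < 1 + t := by linarith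
  have step1 : 1 + t ≤ ε⁻¹ * Real.exp (ε * t) := by
    rw [le_inv_mul_iff₀ hε]
    calc ε * (1 + t) = ε * t + ε := by ring
      _ ≤ ε * t + 1 := by linarith [min_le_right (c/q) (1:ℝ)]
      _ ≤ Real.exp (ε * t) := Real.add_one_le_exp _
  have step2 : (1 + t) ^ q ≤ K * Real.exp (c * t) := by
    calc (1 + t) ^ q ≤ (ε⁻¹ * Real.exp (ε * t)) ^ q :=
          Real.rpow_le_rpow h1t.le step1 hq.le
      _ = ε⁻¹ ^ q * Real.exp (ε * t) ^ q := Real.mul_rpow (by positivity) (Real.exp_nonneg _)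
      _ = K * Real.exp (ε * t * q) := by rw [← Real.exp_mul]
      _ ≤ K * Real.exp (c * t) := by
          refine mul_le_mul_of_nonneg_left (Real.exp_le_exp.mpr ?_) hK.le
          calc ε * t * q = (ε * q) * t := by ring
            _ ≤ c * t := mul_le_mul_of_nonneg_right hεq ht
  have hnorm : ‖Real.exp (-c * t)‖ = Real.exp (-(c * t)) := by
    rw [Real.norm_eq_abs, abs_of_pos (Real.exp_pos _), neg_mul]
  rw [hnorm]
  have hfin : Real.exp (-(c * t)) ≤ K / (1 + t) ^ q := by
    rw [le_div_iff₀ (Real.rpow_pos_of_pos h1t q)]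
    calc Real.exp (-(c * t)) * (1 + t) ^ q
        ≤ Real.exp (-(c * t)) * (K * Real.exp (c * t)) :=
          mul_le_mul_of_nonneg_left step2 (Real.exp_nonneg _)
      _ = K * (Real.exp (-(c * t)) * Real.exp (c * t)) := by ring
      _ = K := by rw [← Real.exp_add, neg_add_cancel, Real.exp_zero, mul_one]
  calc Real.exp (-(c * t)) ≤ K / (1 + t) ^ q := hfin
    _ = K * (1 + t) ^ (-q) := by rw [Real.rpow_neg h1t.le, div_eq_mul_inv]

/-- for `f ∈ LC` with `0` in the interior of its support, the
polar function `f°` is again integrable with positive integral: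
`0 < ∫ f° < ∞`. -/
theorem polar_integrable (n : ℕ) (f : Euc n → ℝ) (hf : IsLC f)
    (h0 : (0 : Euc n) ∈ interior (Function.support f)) :
    0 < ∫⁻ y, ENNReal.ofReal (polarAt f 0 y) ∧
      ∫⁻ y, ENNReal.ofReal (polarAt f 0 y) < ⊤ := by
  obtain ⟨hpos, husc, hlc, hint, hIpos, hsupp⟩ := hf
  have hpolar : ∀ y, polarAt f 0 y =
      ⨅ x : Function.support f, Real.exp (-(inner ℝ (x : Euc n) y : ℝ)) / f x := by
    intro y; unfold polarAt; simp only [sub_zero]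
  obtain ⟨r, hr, hball⟩ := Metric.mem_nhds_iff.mp (mem_interior_iff_mem_nhds.mp h0)
  obtain ⟨m, hm, hm0, hballρ, hmpt⟩ := lc_ball_lower hpos hlc hr hball
  have hρ : 0 < r / (2 * (Real.sqrt n + 1)) := by positivity
  obtain ⟨δ, C, hδ, hC, hdecay⟩ := lc_decay hpos hlc hint hρ hm hm0 hballρ
  have h0supp : (0 : Euc n) ∈ Function.support f := hball (Metric.mem_ball_self hr)
  haveI : Nonempty ↥(Function.support f) := ⟨⟨0, h0supp⟩⟩
  have hfsupp : ∀ x : Euc n, x ∈ Function.support f → 0 < f x := fun x hx =>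
    (hpos x).lt_of_ne' (Function.mem_support.mp hx)
  have hbdd : ∀ y : Euc n, BddBelow (Set.range fun x : Function.support f =>
      Real.exp (-(inner ℝ (x : Euc n) y : ℝ)) / f x) := by
    intro y
    refine ⟨0, ?_⟩
    rintro _ ⟨⟨x, hx⟩, rfl⟩
    exact div_nonneg (Real.exp_nonneg _) (hpos x)
  -- lower bound for the polar near the origin
  have hplow : ∀ y : Euc n, ‖y‖ ≤ δ → C⁻¹ ≤ polarAt f 0 y := by
    intro y hy
    rw [hpolar]
    refine le_ciInf ?_
    rintro ⟨x, hx⟩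
    have hfx : 0 < f x := hfsupp x hx
    rw [le_div_iff₀ hfx]
    calc C⁻¹ * f x ≤ C⁻¹ * (C * Real.exp (-δ * ‖x‖)) :=
          mul_le_mul_of_nonneg_left (hdecay x) (inv_nonneg.mpr hC.le)
      _ = Real.exp (-δ * ‖x‖) := by field_simp
      _ ≤ Real.exp (-(inner ℝ (x : Euc n) y : ℝ)) := by
          apply Real.exp_le_exp.mpr
          have h1 : (inner ℝ (x : Euc n) y : ℝ) ≤ ‖x‖ * ‖y‖ := real_inner_le_norm x y
          have h2 : ‖x‖ * ‖y‖ ≤ ‖x‖ * δ := mul_le_mul_of_nonneg_left hy (norm_nonneg x)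
          nlinarith
  -- upper bound for the polar
  set c : ℝ := (r/2) / (Real.sqrt n + 1) with hcdef
  have hsn : (0:ℝ) ≤ Real.sqrt n := Real.sqrt_nonneg n
  have hc : 0 < c := by rw [hcdef]; positivity
  have hpup : ∀ y : Euc n, polarAt f 0 y ≤ m⁻¹ * Real.exp (-c * ‖y‖) := by
    intro y
    rw [hpolar]
    by_cases hy : y = 0
    · subst hy
      refine ciInf_le_of_le (hbdd 0) ⟨0, h0supp⟩ ?_
      simp only [inner_zero_right, neg_zero, Real.exp_zero, norm_zero, mul_zero]
      rw [one_div, mul_one]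
      exact inv_anti₀ hm hm0
    · -- pick the coordinate with maximal absolute value
      have hn : n ≠ 0 := by
        rintro rfl
        apply hy
        have : ‖y‖ = 0 := by
          rw [EuclideanSpace.norm_eq]
          simp
        exact norm_eq_zero.mp this
      haveI : Nonempty (Fin n) := ⟨⟨0, Nat.pos_of_ne_zero hn⟩⟩
      obtain ⟨i, _, hi⟩ := Finset.exists_max_image Finset.univ (fun j => |y j|)
        Finset.univ_nonempty
      have hmax : ‖y‖ ≤ Real.sqrt n * |y i| := by
        rw [EuclideanSpace.norm_eq]
        have h1 : ∑ j, ‖y j‖ ^ 2 ≤ (n : ℝ) * |y i| ^ 2 := by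
          calc ∑ j, ‖y j‖ ^ 2 ≤ ∑ _j : Fin n, |y i| ^ 2 := by
                refine Finset.sum_le_sum fun j _ => ?_
                rw [Real.norm_eq_abs]
                exact pow_le_pow_left₀ (abs_nonneg _) (hi j (Finset.mem_univ j)) 2
            _ = (n : ℝ) * |y i| ^ 2 := by
                rw [Finset.sum_const, Finset.card_univ, Fintype.card_fin, nsmul_eq_mul]
        calc Real.sqrt (∑ j, ‖y j‖ ^ 2) ≤ Real.sqrt ((n : ℝ) * |y i| ^ 2) :=
              Real.sqrt_le_sqrt h1
          _ = Real.sqrt n * |y i| := by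
              rw [Real.sqrt_mul (Nat.cast_nonneg n), Real.sqrt_sq_eq_abs, abs_abs]
      set xh : Euc n := (if 0 ≤ y i then (r/2) else -(r/2)) • EuclideanSpace.single i 1
        with hxhdef
      have hfxh : m ≤ f xh := by
        have := hmpt (i, decide (0 ≤ y i))
        by_cases h : 0 ≤ y i
        · simpa [hxhdef, h] using this
        · simpa [hxhdef, h] using this
      have hfxh0 : 0 < f xh := lt_of_lt_of_le hm hfxh
      have hinner : (r/2) * |y i| = (inner ℝ xh y : ℝ) := by
        rw [hxhdef, real_inner_smul_left, EuclideanSpace.inner_single_left]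
        simp only [map_one, one_mul]
        by_cases h : 0 ≤ y i
        · rw [if_pos h, abs_of_nonneg h]
        · push_neg at h
          rw [if_neg h.not_ge, abs_of_neg h]
          ring
      have hcy : c * ‖y‖ ≤ (inner ℝ xh y : ℝ) := by
        rw [← hinner, hcdef]
        calc (r/2) / (Real.sqrt n + 1) * ‖y‖
            ≤ (r/2) / (Real.sqrt n + 1) * (Real.sqrt n * |y i|) := by
              refine mul_le_mul_of_nonneg_left hmax (by positivity)
          _ ≤ (r/2) * |y i| := by
              rw [div_mul_eq_mul_div, div_le_iff₀ (by positivity)]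
              nlinarith [abs_nonneg (y i), hr]
      refine ciInf_le_of_le (hbdd y) ⟨xh, ?_⟩ ?_
      · apply hball
        rw [Metric.mem_ball, dist_zero_right, hxhdef, norm_smul,
          EuclideanSpace.norm_single, norm_one, mul_one, Real.norm_eq_abs]
        have : |if 0 ≤ y i then (r/2) else -(r/2)| = r/2 := by
          by_cases h : 0 ≤ y i
          · rw [if_pos h, abs_of_pos (by linarith)]
          · rw [if_neg h, abs_of_neg (by linarith)]; ring
        rw [this]; linarith
      · have h1 : Real.exp (-(inner ℝ xh y : ℝ)) ≤ Real.exp (-c * ‖y‖) := by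
          apply Real.exp_le_exp.mpr
          nlinarith
        calc Real.exp (-(inner ℝ xh y : ℝ)) / f xh ≤ Real.exp (-c * ‖y‖) / m :=
              div_le_div₀ (Real.exp_nonneg _) h1 hm hfxh
          _ = m⁻¹ * Real.exp (-c * ‖y‖) := by rw [div_eq_mul_inv, mul_comm]
  constructor
  · -- positivity of the integral
    have hind : ∀ y : Euc n,
        (Metric.ball (0 : Euc n) δ).indicator (fun _ => ENNReal.ofReal C⁻¹) y ≤
          ENNReal.ofReal (polarAt f 0 y) := by
      intro y
      by_cases hy : y ∈ Metric.ball (0 : Euc n) δ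
      · rw [Set.indicator_of_mem hy]
        refine ENNReal.ofReal_le_ofReal (hplow y ?_)
        rw [Metric.mem_ball, dist_zero_right] at hy
        linarith
      · rw [Set.indicator_of_notMem hy]
        exact zero_le'
    have heq : ∫⁻ y, (Metric.ball (0 : Euc n) δ).indicator
        (fun _ => ENNReal.ofReal C⁻¹) y = ENNReal.ofReal C⁻¹ *
          volume (Metric.ball (0 : Euc n) δ) := by
      rw [lintegral_indicator Metric.isOpen_ball.measurableSet, setLIntegral_const]
    calc (0 : ENNReal) < ENNReal.ofReal C⁻¹ * volume (Metric.ball (0 : Euc n) δ) := by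
          refine ENNReal.mul_pos ?_ ?_
          · exact (ENNReal.ofReal_pos.mpr (inv_pos.mpr hC)).ne'
          · exact (Metric.measure_ball_pos volume _ hδ).ne'
      _ = ∫⁻ y, (Metric.ball (0 : Euc n) δ).indicator
            (fun _ => ENNReal.ofReal C⁻¹) y := heq.symm
      _ ≤ ∫⁻ y, ENNReal.ofReal (polarAt f 0 y) := lintegral_mono hind
  · -- finiteness of the integral
    calc ∫⁻ y, ENNReal.ofReal (polarAt f 0 y)
        ≤ ∫⁻ y, ENNReal.ofReal (m⁻¹ * Real.exp (-c * ‖y‖)) :=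
          lintegral_mono fun y => ENNReal.ofReal_le_ofReal (hpup y)
      _ < ⊤ := ((exp_neg_norm_integrable n hc).const_mul m⁻¹).lintegral_lt_top
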